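/- arXiv:2205.15022 — 5 statements merged into one kernel-verified Lean document; each statement's English description precedes it below -/
import Mathlib

section
/- For 0 < p ≤ 1, the function N : ℝ × ℝ → [0,1] defined by N(x,t) = t/(t + |x|^p) for t > 0 and N(x,t) = 0 for t ≤ 0, together with φ(c) = |c|^p, K = 2^p, and the minimum t-norm, is a fuzzy strong φ-b-norm on ℝ; in particular N(x+y, 2^p·s + t) ≥ min(N(x,s), N(y,t)) for all x,y ∈ ℝ and s,t > 0. -/
open Filter Topology

/-- A fuzzy strong φ-b-norm on a real linear space `X`. -/
structure FuzzyStrongPhiBNorm (X : Type*) [AddCommGroup X] [Module ℝ X] where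
  N : X → ℝ → ℝ
  phi : ℝ → ℝ
  K : ℝ
  op : ℝ → ℝ → ℝ
  K_ge_one : 1 ≤ K
  N_nonneg : ∀ x t, 0 ≤ N x t
  N_le_one : ∀ x t, N x t ≤ 1
  phi_even : ∀ t, phi (-t) = phi t
  phi_one : phi 1 = 1
  phi_strictMono : StrictMonoOn phi (Set.Ioi (0:ℝ))
  phi_cont : ContinuousOn phi (Set.Ioi (0:ℝ))
  phi_lim_zero : Tendsto phi (nhdsWithin 0 (Set.Ioi 0)) (nhds 0)
  phi_lim_top : Tendsto phi atTop atTop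
  bN1 : ∀ x t, t ≤ 0 → N x t = 0
  bN2 : ∀ x, (∀ t > 0, N x t = 1) ↔ x = 0
  bN3 : ∀ (c : ℝ) (x : X) (t : ℝ), 0 < t → phi c ≠ 0 → N (c • x) t = N x (t / phi c)
  bN4 : ∀ (x y : X) (s t : ℝ), op (N x s) (N y t) ≤ N (x + y) (s + K * t)
  bN5_mono : ∀ x : X, Monotone (N x)
  bN5_lim : ∀ x : X, Tendsto (N x) atTop (nhds 1)

/-- The t-norm is continuous at (1,1): sequences tending to 1 combine to 1. -/
def ContAtOneOne (op : ℝ → ℝ → ℝ) : Prop :=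
  ∀ a b : ℕ → ℝ, Tendsto a atTop (nhds 1) → Tendsto b atTop (nhds 1) →
    Tendsto (fun n => op (a n) (b n)) atTop (nhds 1)

noncomputable def N3 (p : ℝ) (x t : ℝ) : ℝ := if 0 < t then t / (t + |x| ^ p) else 0

lemma N3_pos (p x t : ℝ) (ht : 0 < t) : N3 p x t = t / (t + |x| ^ p) := if_pos ht

lemma N3_nonneg (p x t : ℝ) : 0 ≤ N3 p x t := by
  unfold N3; split
  · positivity
  · exact le_refl 0
lemma N3_le_one (p x t : ℝ) : N3 p x t ≤ 1 := by
  unfold N3; split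
  · apply div_le_one_of_le₀
    · nlinarith [Real.rpow_nonneg (abs_nonneg x) p]
    · nlinarith [Real.rpow_nonneg (abs_nonneg x) p]
  · norm_num

/-- monotonicity of `t ↦ t/(t+a)` -/
lemma frac_mono {a s t : ℝ} (ha : 0 ≤ a) (hs : 0 < s) (hst : s ≤ t) :
    s / (s + a) ≤ t / (t + a) := by
  rw [div_le_div_iff₀ (by linarith) (by linarith)]
  nlinarith

/-- antitonicity in the denominator -/
lemma frac_anti {t a b : ℝ} (ht : 0 < t) (hb : 0 ≤ b) (hab : b ≤ a) :
    t / (t + a) ≤ t / (t + b) := by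
  apply div_le_div_of_nonneg_left ht.le (by linarith)
  linarith

/-- the mediant inequality -/
lemma mediant {s t a b : ℝ} (hs : 0 < s) (ht : 0 < t) (ha : 0 ≤ a) (hb : 0 ≤ b) :
    min (s / (s + a)) (t / (t + b)) ≤ (s + t) / (s + t + (a + b)) := by
  rcases le_total (s / (s + a)) (t / (t + b)) with h | h
  · rw [min_eq_left h]
    rw [div_le_div_iff₀ (by linarith) (by linarith)] at h ⊢
    nlinarith
  · rw [min_eq_right h]
    rw [div_le_div_iff₀ (by linarith) (by linarith)] at h ⊢
    nlinarith

lemma rpow_subadd {p : ℝ} (hp : 0 ≤ p) (hp1 : p ≤ 1) (x y : ℝ) :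
    |x + y| ^ p ≤ |x| ^ p + |y| ^ p := by
  have h1 : ‖x + y‖₊ ^ p ≤ (‖x‖₊ + ‖y‖₊) ^ p :=
    NNReal.rpow_le_rpow (nnnorm_add_le x y) hp
  have h2 := NNReal.rpow_add_le_add_rpow ‖x‖₊ ‖y‖₊ hp hp1
  have h3 := h1.trans h2
  have := (NNReal.coe_le_coe).2 h3
  simpa [NNReal.coe_rpow, Real.norm_eq_abs] using this

lemma N3_mono (p x : ℝ) : Monotone (N3 p x) := by
  intro s t hst
  unfold N3
  by_cases hs : 0 < s
  · rw [if_pos hs, if_pos (lt_of_lt_of_le hs hst)]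
    exact frac_mono (Real.rpow_nonneg (abs_nonneg x) p) hs hst
  · rw [if_neg hs]
    split
    · positivity
    · exact le_refl 0

lemma N3_key (p : ℝ) (hp : 0 < p) (hp1 : p ≤ 1) {K : ℝ} (hK : 1 ≤ K)
    (x y s t : ℝ) (hs : 0 < s) (ht : 0 < t) :
    min (N3 p x s) (N3 p y t) ≤ N3 p (x + y) (s + K * t) := by
  have hKt : t ≤ K * t := le_mul_of_one_le_left ht.le hK
  have hst : 0 < s + K * t := by nlinarith
  rw [N3_pos p x s hs, N3_pos p y t ht, N3_pos p (x + y) _ hst]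
  have ha : 0 ≤ |x| ^ p := Real.rpow_nonneg (abs_nonneg x) p
  have hb : 0 ≤ |y| ^ p := Real.rpow_nonneg (abs_nonneg y) p
  have hc : 0 ≤ |x + y| ^ p := Real.rpow_nonneg (abs_nonneg _) p
  calc min (s / (s + |x| ^ p)) (t / (t + |y| ^ p))
      ≤ (s + t) / (s + t + (|x| ^ p + |y| ^ p)) := mediant hs ht ha hb
    _ ≤ (s + t) / (s + t + |x + y| ^ p) :=
        frac_anti (by linarith) hc (rpow_subadd hp.le hp1 x y)
    _ ≤ (s + K * t) / (s + K * t + |x + y| ^ p) :=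
        frac_mono hc (by linarith) (by linarith)

theorem stmt3 (p : ℝ) (hp : 0 < p) (hp1 : p ≤ 1) :
    (∃ F : FuzzyStrongPhiBNorm ℝ,
      F.N = N3 p ∧ F.phi = (fun c : ℝ => |c| ^ p) ∧ F.K = 2 ^ p ∧ F.op = min) ∧
    (∀ x y s t : ℝ, 0 < s → 0 < t →
      min (N3 p x s) (N3 p y t) ≤ N3 p (x + y) (2 ^ p * s + t)) := by
  have hK : (1 : ℝ) ≤ 2 ^ p := Real.one_le_rpow (by norm_num) hp.le
  constructor
  · refine ⟨⟨N3 p, fun c => |c| ^ p, 2 ^ p, min, hK, N3_nonneg p, N3_le_one p,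
      ?_, ?_, ?_, ?_, ?_, ?_, ?_, ?_, ?_, ?_, N3_mono p, ?_⟩, rfl, rfl, rfl, rfl⟩
    · intro t; simp only [abs_neg]
    · simp
    · intro a ha b hb hab
      simp only [Set.mem_Ioi] at ha hb
      simp only
      rw [abs_of_pos ha, abs_of_pos hb]
      exact Real.rpow_lt_rpow (le_of_lt ha) hab hp
    · exact continuous_abs.continuousOn.rpow_const (fun x _ => Or.inr hp.le)
    · have hcont : ContinuousAt (fun c : ℝ => |c| ^ p) 0 := by
        apply ContinuousAt.comp (g := fun c : ℝ => c ^ p)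
        · have := Real.continuousAt_rpow_const 0 p (Or.inr hp.le)
          simpa using this
        · exact continuous_abs.continuousAt
      have := hcont.tendsto
      simp only [abs_zero, Real.zero_rpow hp.ne'] at this
      exact this.mono_left nhdsWithin_le_nhds
    · exact (tendsto_rpow_atTop hp).comp tendsto_abs_atTop_atTop
    · intro x t ht; exact if_neg (not_lt.2 ht)
    · intro x
      constructor
      · intro h
        have h1 := h 1 one_pos
        rw [N3_pos p x 1 one_pos] at h1
        field_simp at h1
        exact abs_eq_zero.mp ((Real.rpow_eq_zero_iff_of_nonneg (abs_nonneg x)).mp (by linarith)).1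
      · rintro rfl
        intro t ht
        rw [N3_pos p 0 t ht]
        simp [Real.zero_rpow hp.ne', ht.ne']
    · intro c x t ht hc
      have hc' : 0 < |c| ^ p := lt_of_le_of_ne (Real.rpow_nonneg (abs_nonneg c) p) (Ne.symm hc)
      have htc : 0 < t / |c| ^ p := div_pos ht hc'
      rw [N3_pos _ _ _ ht, N3_pos _ _ _ htc]
      have habs : |c • x| ^ p = |c| ^ p * |x| ^ p := by
        rw [smul_eq_mul, abs_mul, Real.mul_rpow (abs_nonneg c) (abs_nonneg x)]
      rw [habs]
      field_simp
    · intro x y s t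
      by_cases hs : 0 < s
      · by_cases ht : 0 < t
        · exact N3_key p hp hp1 hK x y s t hs ht
        · calc min (N3 p x s) (N3 p y t) ≤ N3 p y t := min_le_right _ _
            _ = 0 := if_neg ht
            _ ≤ _ := N3_nonneg _ _ _
      · calc min (N3 p x s) (N3 p y t) ≤ N3 p x s := min_le_left _ _
          _ = 0 := if_neg hs
          _ ≤ _ := N3_nonneg _ _ _
    · intro x
      have ha : 0 ≤ |x| ^ p := Real.rpow_nonneg (abs_nonneg x) p
      have h1 : Tendsto (fun t : ℝ => 1 - |x| ^ p / (t + |x| ^ p)) atTop (nhds 1) := by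
        have h2 : Tendsto (fun t : ℝ => |x| ^ p / (t + |x| ^ p)) atTop (nhds 0) :=
          tendsto_const_nhds.div_atTop (tendsto_atTop_add_const_right _ _ tendsto_id)
        simpa using (tendsto_const_nhds (x := (1:ℝ))).sub h2
      apply h1.congr'
      filter_upwards [eventually_gt_atTop 0] with t ht
      rw [N3_pos p x t ht]
      field_simp
      ring
  · intro x y s t hs ht
    have h := N3_key p hp hp1 hK y x t s ht hs
    rw [min_comm, add_comm y x] at h
    rw [show (2:ℝ) ^ p * s + t = t + 2 ^ p * s from by ring]
    exact h
end

section
/- For 0 < p ≤ 1 and s,t > 0 and x,y ∈ ℝ, one has (2^p·s + t)/(2^p·s + t + |x+y|^p) ≥ min( s/(s+|x|^p), t/(t+|y|^p) ). -/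
theorem frac_triangle (p s t x y : ℝ) (hp : 0 < p) (hp1 : p ≤ 1)
    (hs : 0 < s) (ht : 0 < t) :
    min (s / (s + |x| ^ p)) (t / (t + |y| ^ p)) ≤
      (2 ^ p * s + t) / (2 ^ p * s + t + |x + y| ^ p) := by
  have key : ∀ u v : ℝ, 0 ≤ u → 0 ≤ v → (u + v) ^ p ≤ u ^ p + v ^ p := by
    intro u v hu hv
    have h := NNReal.rpow_add_le_add_rpow u.toNNReal v.toNNReal hp.le hp1
    have h2 := NNReal.coe_le_coe.2 h
    push_cast at h2
    rwa [Real.coe_toNNReal u hu, Real.coe_toNNReal v hv] at h2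
  set a := |x| ^ p with ha_def
  set b := |y| ^ p with hb_def
  have ha : 0 ≤ a := Real.rpow_nonneg (abs_nonneg x) p
  have hb : 0 ≤ b := Real.rpow_nonneg (abs_nonneg y) p
  have hc : |x + y| ^ p ≤ a + b := by
    calc |x + y| ^ p ≤ (|x| + |y|) ^ p :=
          Real.rpow_le_rpow (abs_nonneg _) (abs_add_le x y) hp.le
      _ ≤ a + b := key _ _ (abs_nonneg x) (abs_nonneg y)
  have h2p : (1 : ℝ) ≤ 2 ^ p := Real.one_le_rpow one_le_two hp.le
  set m := min (s / (s + a)) (t / (t + b)) with hm_def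
  have hm0 : 0 ≤ m := le_min (by positivity) (by positivity)
  have hma : m * (s + a) ≤ s := by
    have := min_le_left (s / (s + a)) (t / (t + b))
    calc m * (s + a) ≤ s / (s + a) * (s + a) := by
          apply mul_le_mul_of_nonneg_right this (by positivity)
      _ = s := by field_simp
  have hmb : m * (t + b) ≤ t := by
    have := min_le_right (s / (s + a)) (t / (t + b))
    calc m * (t + b) ≤ t / (t + b) * (t + b) := by
          apply mul_le_mul_of_nonneg_right this (by positivity)
      _ = t := by field_simp
  rw [le_div_iff₀ (by positivity)]
  have hcn : 0 ≤ |x + y| ^ p := Real.rpow_nonneg (abs_nonneg _) p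
  nlinarith [mul_le_mul_of_nonneg_left hc hm0, mul_le_mul_of_nonneg_right hma (le_of_lt (lt_of_lt_of_le one_pos h2p)), mul_nonneg hm0 ha]
end

section
/- Every finite dimensional fuzzy strong φ-b-normed linear space (X, N, φ, K, *) with t-norm * continuous at (1,1) is complete, i.e., every Cauchy sequence in X converges. -/
open Filter Topology

section Helpers

variable {X : Type*} [AddCommGroup X] [Module ℝ X] (F : FuzzyStrongPhiBNorm X)

lemma phi_pos : ∀ s : ℝ, 0 < s → 0 < F.phi s := by
  intro s hs
  have h1 : 0 ≤ F.phi (s / 2) := by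
    refine le_of_tendsto F.phi_lim_zero ?_
    filter_upwards [Ioo_mem_nhdsGT_of_mem ⟨le_refl 0, half_pos hs⟩] with u hu
    exact (F.phi_strictMono hu.1 (half_pos hs) hu.2).le
  exact lt_of_le_of_lt h1 (F.phi_strictMono (half_pos hs) hs (half_lt_self hs))

lemma phi_abs (c : ℝ) : F.phi c = F.phi |c| := by
  rcases abs_choice c with h | h
  · rw [h]
  · rw [h, F.phi_even]

lemma phi_ne (c : ℝ) (hc : c ≠ 0) : F.phi c ≠ 0 := by
  rw [phi_abs]
  exact ne_of_gt (phi_pos F _ (abs_pos.2 hc))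

lemma N_zero : ∀ t > 0, F.N 0 t = 1 := (F.bN2 0).mpr rfl

lemma tendsto_one_of {ι : Type*} {l : Filter ι} (f : ι → ℝ) (hle : ∀ n, f n ≤ 1)
    (h : ∀ ε > (0:ℝ), ∀ᶠ n in l, 1 - ε < f n) : Tendsto f l (nhds 1) := by
  refine tendsto_order.2 ⟨fun a ha => ?_, fun a ha => ?_⟩
  · have := h (1 - a) (by linarith)
    filter_upwards [this] with n hn; linarith
  · exact Eventually.of_forall fun n => lt_of_le_of_lt (hle n) ha

/-- Lemma A: scalar multiples of a fixed vector with scalars → 0. -/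
lemma lemA (v : X) (a : ℕ → ℝ) (ha : Tendsto a atTop (nhds 0)) :
    ∀ t > 0, Tendsto (fun m => F.N (a m • v) t) atTop (nhds 1) := by
  intro t ht
  refine tendsto_one_of _ (fun m => F.N_le_one _ _) ?_
  intro ε hε
  -- choose M > 0 with N v M > 1 - ε
  obtain ⟨M₀, hM₀⟩ := ((F.bN5_lim v).eventually (eventually_gt_nhds (by linarith : (1:ℝ) - ε < 1))).exists
  set M := max M₀ 1 with hM
  have hMpos : 0 < M := lt_of_lt_of_le one_pos (le_max_right _ _)
  have hNM : 1 - ε < F.N v M := lt_of_lt_of_le hM₀ (F.bN5_mono v (le_max_left _ _))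
  -- choose δ > 0 with phi δ < t / M
  have htM : 0 < t / M := div_pos ht hMpos
  obtain ⟨δ, hδ1, hδ2⟩ := ((F.phi_lim_zero.eventually (eventually_lt_nhds htM)).and
    self_mem_nhdsWithin).exists
  have hδpos : (0:ℝ) < δ := hδ2
  -- eventually |a m| < δ
  have habs : Tendsto (fun m => |a m|) atTop (nhds 0) := by
    simpa using ha.abs
  filter_upwards [habs.eventually (eventually_lt_nhds hδpos)] with m hm
  rcases eq_or_ne (a m) 0 with h0 | h0
  · rw [h0, zero_smul, N_zero F t ht]; linarith
  · have hpos : 0 < |a m| := abs_pos.2 h0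
    have hphipos : 0 < F.phi (a m) := by rw [phi_abs]; exact phi_pos F _ hpos
    rw [F.bN3 (a m) v t ht (ne_of_gt hphipos)]
    have h1 : F.phi (a m) < t / M := by
      rw [phi_abs]
      exact lt_trans (F.phi_strictMono (Set.mem_Ioi.2 hpos) hδ2 hm) hδ1
    have h2 : M ≤ t / F.phi (a m) := by
      rw [le_div_iff₀ hphipos]
      refine le_of_lt ?_
      calc M * F.phi (a m) < M * (t / M) := by
            exact mul_lt_mul_of_pos_left h1 hMpos
        _ = t := by field_simp
    exact lt_of_lt_of_le hNM (F.bN5_mono v h2)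

/-- Lemma B: sums of sequences each tending to 1 in N. -/
lemma lemAdd (hop : ContAtOneOne F.op) (u w : ℕ → X)
    (hu : ∀ t > 0, Tendsto (fun m => F.N (u m) t) atTop (nhds 1))
    (hw : ∀ t > 0, Tendsto (fun m => F.N (w m) t) atTop (nhds 1)) :
    ∀ t > 0, Tendsto (fun m => F.N (u m + w m) t) atTop (nhds 1) := by
  intro t ht
  have hK : (0:ℝ) < F.K := lt_of_lt_of_le one_pos F.K_ge_one
  have hts : t / 2 + F.K * (t / (2 * F.K)) = t := by field_simp; ring
  have hlow : ∀ m, F.op (F.N (u m) (t/2)) (F.N (w m) (t/(2*F.K))) ≤ F.N (u m + w m) t := by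
    intro m
    have := F.bN4 (u m) (w m) (t/2) (t/(2*F.K))
    rwa [hts] at this
  refine tendsto_of_tendsto_of_tendsto_of_le_of_le
    (hop _ _ (hu (t/2) (half_pos ht)) (hw (t/(2*F.K)) (div_pos ht (by positivity))))
    tendsto_const_nhds hlow (fun m => F.N_le_one _ _)

/-- Lemma C: finite sums of scalar multiples with scalars → 0. -/
lemma lemSum (hop : ContAtOneOne F.op) {ι : Type*} (s : Finset ι) (v : ι → X)
    (a : ℕ → ι → ℝ) (ha : ∀ i ∈ s, Tendsto (fun m => a m i) atTop (nhds 0)) :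
    ∀ t > 0, Tendsto (fun m => F.N (∑ i ∈ s, a m i • v i) t) atTop (nhds 1) := by
  classical
  induction s using Finset.induction_on with
  | empty =>
      intro t ht
      simp only [Finset.sum_empty, N_zero F t ht]
      exact tendsto_const_nhds
  | insert _ _ hi ih =>
      rename_i j s'
      intro t ht
      simp only [Finset.sum_insert hi]
      exact lemAdd F hop _ _ (lemA F (v j) _ (ha j (Finset.mem_insert_self j s')))
        (ih (fun i hi' => ha i (Finset.mem_insert_of_mem hi'))) t ht

end Helpers

theorem stmt11 {X : Type*} [AddCommGroup X] [Module ℝ X] [FiniteDimensional ℝ X]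
    (F : FuzzyStrongPhiBNorm X) (hop : ContAtOneOne F.op)
    (x : ℕ → X)
    (hcauchy : ∀ t > 0,
      Tendsto (fun q : ℕ × ℕ => F.N (x q.1 - x q.2) t) atTop (nhds 1)) :
    ∃ x₀ : X, ∀ t > 0, Tendsto (fun m => F.N (x m - x₀) t) atTop (nhds 1) := by
  classical
  set n := Module.finrank ℝ X with hn
  set b : Module.Basis (Fin n) ℝ X := Module.finBasis ℝ X with hb
  set c : ℕ → Fin n → ℝ := fun m => b.repr (x m) with hc
  set α : ℕ × ℕ → ℝ := fun q => ∑ i, |b.repr (x q.1 - x q.2) i| with hα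
  have key : Tendsto α atTop (nhds 0) := by
    by_contra hnot
    have hnn : ∀ q, 0 ≤ α q := fun q => Finset.sum_nonneg fun _ _ => abs_nonneg _
    have hX : ¬ ∀ ε > (0:ℝ), ∀ᶠ q in atTop, α q < ε := by
      intro hall
      exact hnot (tendsto_order.2 ⟨fun a ha =>
        Eventually.of_forall fun q => lt_of_lt_of_le ha (hnn q), fun a ha => hall a ha⟩)
    push_neg at hX
    obtain ⟨ε, hε, hfreq⟩ := hX
    simp only [← not_lt] at hfreq
    have hfreq' : ∀ a : ℕ × ℕ, ∃ p ≥ a, ε ≤ α p := by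
      intro a
      obtain ⟨p, hp1, hp2⟩ := (frequently_atTop.1 hfreq) a
      exact ⟨p, hp1, not_lt.1 hp2⟩
    choose q hq1 hq2 using fun j : ℕ => hfreq' (j, j)
    have hqt : Tendsto q atTop atTop := by
      rw [← prod_atTop_atTop_eq]
      have h1 : Tendsto (fun j => (q j).1) atTop atTop :=
        tendsto_atTop_mono (fun j => (hq1 j).1) tendsto_id
      have h2 : Tendsto (fun j => (q j).2) atTop atTop :=
        tendsto_atTop_mono (fun j => (hq1 j).2) tendsto_id
      simpa using h1.prodMk h2
    set z : ℕ → X := fun j => x (q j).1 - x (q j).2 with hz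
    have hNz : ∀ t > 0, Tendsto (fun j => F.N (z j) t) atTop (nhds 1) :=
      fun t ht => (hcauchy t ht).comp hqt
    set A : ℕ → ℝ := fun j => α (q j) with hA
    have hAε : ∀ j, ε ≤ A j := hq2
    have hApos : ∀ j, 0 < A j := fun j => lt_of_lt_of_le hε (hAε j)
    set w : ℕ → X := fun j => (A j)⁻¹ • z j with hw
    set r : ℕ → Fin n → ℝ := fun j => (b.repr (w j) : Fin n → ℝ) with hr
    have hrA : ∀ j i, r j i = (A j)⁻¹ * b.repr (z j) i := by
      intro j i
      simp [hr, hw, map_smul, Finsupp.smul_apply, smul_eq_mul]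
    have hr1 : ∀ j, ∑ i, |r j i| = 1 := by
      intro j
      have h1 : ∑ i, |r j i| = (A j)⁻¹ * ∑ i, |b.repr (z j) i| := by
        rw [Finset.mul_sum]
        refine Finset.sum_congr rfl fun i _ => ?_
        rw [hrA, abs_mul, abs_of_pos (inv_pos.2 (hApos j))]
      have h2 : ∑ i, |b.repr (z j) i| = A j := rfl
      rw [h1, h2, inv_mul_cancel₀ (ne_of_gt (hApos j))]
    have hrball : ∀ j, r j ∈ Metric.closedBall (0 : Fin n → ℝ) 1 := by
      intro j
      rw [mem_closedBall_zero_iff, pi_norm_le_iff_of_nonneg zero_le_one]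
      intro i
      rw [Real.norm_eq_abs]
      calc |r j i| ≤ ∑ i', |r j i'| :=
            Finset.single_le_sum (f := fun i' => |r j i'|)
              (fun _ _ => abs_nonneg _) (Finset.mem_univ i)
        _ = 1 := hr1 j
    obtain ⟨γ, hγmem, φ, hφ, hrφ⟩ :=
      tendsto_subseq_of_bounded Metric.isBounded_closedBall hrball
    have hγ1 : ∑ i, |γ i| = 1 := by
      have hcont : Continuous fun cv : Fin n → ℝ => ∑ i, |cv i| :=
        continuous_finset_sum _ (fun i _ => (continuous_apply i).abs)
      have h1 : Tendsto (fun k => ∑ i, |r (φ k) i|) atTop (nhds (∑ i, |γ i|)) :=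
        (hcont.tendsto γ).comp hrφ
      have h2 : Tendsto (fun k => ∑ i, |r (φ k) i|) atTop (nhds 1) := by
        simp only [hr1]; exact tendsto_const_nhds
      exact tendsto_nhds_unique h1 h2
    set zl : X := ∑ i, γ i • b i with hzl
    have hzlrepr : (b.repr zl : Fin n → ℝ) = γ := by
      rw [hzl]; exact b.repr_sum_self γ
    have hzlne : zl ≠ 0 := by
      intro h0
      have hγ0 : γ = 0 := by rw [← hzlrepr, h0]; simp
      rw [hγ0] at hγ1; simp at hγ1
    have hNw : ∀ t > 0, Tendsto (fun j => F.N (w j) t) atTop (nhds 1) := by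
      intro t ht
      have hεinv : (0:ℝ) < ε⁻¹ := inv_pos.2 hε
      have hs0 : 0 < t / F.phi ε⁻¹ := div_pos ht (phi_pos F _ hεinv)
      refine tendsto_of_tendsto_of_tendsto_of_le_of_le (hNz _ hs0) tendsto_const_nhds
        (fun j => ?_) (fun j => F.N_le_one _ _)
      have hAinv : 0 < (A j)⁻¹ := inv_pos.2 (hApos j)
      rw [show w j = (A j)⁻¹ • z j from rfl,
        F.bN3 _ _ t ht (phi_ne F _ (ne_of_gt hAinv))]
      refine F.bN5_mono (z j) ?_
      have hle : (A j)⁻¹ ≤ ε⁻¹ := by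
        apply inv_anti₀ hε (hAε j)
      have hphile : F.phi (A j)⁻¹ ≤ F.phi ε⁻¹ :=
        F.phi_strictMono.monotoneOn (Set.mem_Ioi.2 hAinv) (Set.mem_Ioi.2 hεinv) hle
      exact div_le_div_of_nonneg_left ht.le (phi_pos F _ hAinv) hphile
    have hwsum : ∀ j, w j = ∑ i, r j i • b i := fun j => (b.sum_repr (w j)).symm
    have hdiff : ∀ k, zl - w (φ k) = ∑ i, (γ i - r (φ k) i) • b i := by
      intro k
      rw [hwsum, hzl, ← Finset.sum_sub_distrib]
      simp [sub_smul]
    have hcoordlim : ∀ i, Tendsto (fun k => γ i - r (φ k) i) atTop (nhds 0) := by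
      intro i
      have h1 : Tendsto (fun k => r (φ k) i) atTop (nhds (γ i)) := (tendsto_pi_nhds.1 hrφ) i
      simpa using (tendsto_const_nhds (x := γ i)).sub h1
    have hNdiff := lemSum F hop Finset.univ (fun i => b i)
      (fun k i => γ i - r (φ k) i) (fun i _ => hcoordlim i)
    have hone : ∀ u > 0, F.N zl u = 1 := by
      intro u hu
      have hK : (0:ℝ) < F.K := lt_of_lt_of_le one_pos F.K_ge_one
      have hus : u / 2 + F.K * (u / (2 * F.K)) = u := by field_simp; ring
      have hlow : ∀ k, F.op (F.N (zl - w (φ k)) (u/2)) (F.N (w (φ k)) (u/(2*F.K)))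
          ≤ F.N zl u := by
        intro k
        have h4 := F.bN4 (zl - w (φ k)) (w (φ k)) (u/2) (u/(2*F.K))
        rwa [sub_add_cancel, hus] at h4
      have hseq : Tendsto (fun k => F.op (F.N (zl - w (φ k)) (u/2))
          (F.N (w (φ k)) (u/(2*F.K)))) atTop (nhds 1) := by
        apply hop
        · have h5 := hNdiff (u/2) (half_pos hu)
          simp only [← hdiff] at h5
          exact h5
        · exact (hNw (u/(2*F.K)) (by positivity)).comp hφ.tendsto_atTop
      have h1le : (1:ℝ) ≤ F.N zl u := le_of_tendsto hseq (Eventually.of_forall hlow)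
      exact le_antisymm (F.N_le_one _ _) h1le
    exact hzlne ((F.bN2 zl).mp hone)
  have hco : ∀ i, ∃ β : ℝ, Tendsto (fun m => c m i) atTop (nhds β) := by
    intro i
    have hcoord : Tendsto (fun q : ℕ × ℕ => |b.repr (x q.1 - x q.2) i|) atTop (nhds 0) := by
      refine tendsto_of_tendsto_of_tendsto_of_le_of_le tendsto_const_nhds key
        (fun q => abs_nonneg _) (fun q => ?_)
      exact Finset.single_le_sum (f := fun j => |b.repr (x q.1 - x q.2) j|) (fun _ _ => abs_nonneg _) (Finset.mem_univ i)
    have hC : CauchySeq (fun m => c m i) := by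
      rw [Metric.cauchySeq_iff]
      intro ε hε
      have := hcoord.eventually (eventually_lt_nhds hε)
      rw [eventually_atTop] at this
      obtain ⟨a, ha⟩ := this
      refine ⟨max a.1 a.2, fun m hm k hk => ?_⟩
      have hmk := ha (m, k) ⟨le_trans (le_max_left _ _) hm, le_trans (le_max_right _ _) hk⟩
      have hrepr : b.repr (x m - x k) i = c m i - c k i := by
        simp [hc, map_sub, Finsupp.sub_apply]
      rw [Real.dist_eq]
      rw [hrepr] at hmk
      exact hmk
    exact cauchySeq_tendsto_of_complete hC
  choose β hβ using hco
  refine ⟨∑ i, β i • b i, ?_⟩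
  have hrw : ∀ m, x m - (∑ i, β i • b i) = ∑ i, (c m i - β i) • b i := by
    intro m
    conv_lhs => rw [← b.sum_repr (x m)]
    rw [← Finset.sum_sub_distrib]
    simp [sub_smul, hc]
  intro t ht
  have := lemSum F hop Finset.univ (fun i => b i) (fun m i => c m i - β i)
    (fun i _ => by simpa using (hβ i).sub (tendsto_const_nhds (x := β i))) t ht
  simpa only [hrw] using this
end

section
/- Let A be a compact subset of a fuzzy strong φ-b-normed linear space (X, N, φ, K, *) with * continuous at (1,1). Then A is fuzzy bounded: for each r with 0 < r < 1, there exists t > 0 such that N(x, t) > 1 − r for all x ∈ A. -/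
open Filter Topology

theorem stmt13 {X : Type*} [AddCommGroup X] [Module ℝ X]
    (F : FuzzyStrongPhiBNorm X) (hop : ContAtOneOne F.op) (A : Set X)
    (hcompact : ∀ x : ℕ → X, (∀ m, x m ∈ A) →
      ∃ (y : X) (_ : y ∈ A) (φ : ℕ → ℕ), StrictMono φ ∧
        ∀ t > 0, Tendsto (fun k => F.N (x (φ k) - y) t) atTop (nhds 1)) :
    ∀ r : ℝ, 0 < r → r < 1 → ∃ t > 0, ∀ x ∈ A, F.N x t > 1 - r := by
  intro r hr hr1
  by_contra h
  push_neg at h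
  have hK : (1:ℝ) ≤ F.K := F.K_ge_one
  have hx : ∀ n : ℕ, ∃ x ∈ A, F.N x (1 + F.K * n) ≤ 1 - r := by
    intro n
    have hpos : (0:ℝ) < 1 + F.K * n := by positivity
    exact h _ hpos
  choose x hxA hxN using hx
  obtain ⟨y, hy, φ, hφ, hconv⟩ := hcompact x hxA
  have hφtop : Tendsto (fun k => (φ k : ℝ)) atTop atTop :=
    tendsto_natCast_atTop_atTop.comp hφ.tendsto_atTop
  have hb : Tendsto (fun k => F.N y (φ k)) atTop (nhds 1) :=
    (F.bN5_lim y).comp hφtop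
  have ha : Tendsto (fun k => F.N (x (φ k) - y) 1) atTop (nhds 1) :=
    hconv 1 one_pos
  have hlim := hop _ _ ha hb
  have hle : ∀ k, F.op (F.N (x (φ k) - y) 1) (F.N y (φ k)) ≤ 1 - r := by
    intro k
    calc F.op (F.N (x (φ k) - y) 1) (F.N y (φ k))
        ≤ F.N (x (φ k) - y + y) (1 + F.K * φ k) := F.bN4 _ _ _ _
      _ = F.N (x (φ k)) (1 + F.K * φ k) := by rw [sub_add_cancel]
      _ ≤ 1 - r := hxN (φ k)
  have : (1:ℝ) ≤ 1 - r := le_of_tendsto hlim (Filter.Eventually.of_forall hle)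
  linarith
end

section
/- In a finite dimensional fuzzy strong φ-b-normed linear space (X, N, φ, K, *) with * continuous at (1,1), a subset A ⊆ X is compact if and only if A is closed and fuzzy bounded. -/
open Filter Topology

namespace FuzzyStrongPhiBNorm

variable {X : Type*} [AddCommGroup X] [Module ℝ X] (F : FuzzyStrongPhiBNorm X)

lemma K_pos : (0:ℝ) < F.K := lt_of_lt_of_le one_pos F.K_ge_one

lemma phi_pos {c : ℝ} (hc : 0 < c) : 0 < F.phi c := by
  have h1 : (0:ℝ) ≤ F.phi (c/2) := by
    refine le_of_tendsto F.phi_lim_zero ?_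
    filter_upwards [self_mem_nhdsWithin,
      ((eventually_lt_nhds (half_pos hc)).filter_mono nhdsWithin_le_nhds)] with s hs1 hs2
    exact (F.phi_strictMono.monotoneOn hs1 (half_pos hc) hs2.le)
  exact lt_of_le_of_lt h1 (F.phi_strictMono (half_pos hc) hc (half_lt_self hc))

lemma phi_abs (c : ℝ) : F.phi c = F.phi |c| := by
  rcases le_or_gt 0 c with h | h
  · rw [abs_of_nonneg h]
  · rw [abs_of_neg h, ← F.phi_even c]

lemma N_zero {t : ℝ} (ht : 0 < t) : F.N 0 t = 1 := ((F.bN2 0).mpr rfl) t ht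

lemma N_neg (x : X) {t : ℝ} (ht : 0 < t) : F.N (-x) t = F.N x t := by
  have hphi : F.phi (-1) = 1 := (F.phi_even 1).trans F.phi_one
  have h := F.bN3 (-1) x t ht (by rw [hphi]; norm_num)
  rwa [neg_one_smul, hphi, div_one] at h

lemma tendsto_one_of {f : ℕ → ℝ} (h1 : ∀ k, f k ≤ 1)
    (h2 : ∀ ε : ℝ, 0 < ε → ∀ᶠ k in atTop, 1 - ε < f k) : Tendsto f atTop (𝓝 1) := by
  refine tendsto_order.2 ⟨fun a ha => ?_, fun a ha =>
    Filter.Eventually.of_forall fun k => lt_of_le_of_lt (h1 k) ha⟩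
  filter_upwards [h2 (1 - a) (by linarith)] with k hk
  linarith

/-- A sequence converging to `0` in the fuzzy sense. -/
def FuzzyNull (z : ℕ → X) : Prop :=
  ∀ t > 0, Tendsto (fun k => F.N (z k) t) atTop (𝓝 1)

lemma fuzzyNull_add (hop : ContAtOneOne F.op) {u v : ℕ → X}
    (hu : F.FuzzyNull u) (hv : F.FuzzyNull v) : F.FuzzyNull (fun k => u k + v k) := by
  intro t ht
  have hK := F.K_pos
  have h4 : ∀ k, F.op (F.N (u k) (t/2)) (F.N (v k) (t/(2*F.K))) ≤ F.N (u k + v k) t := by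
    intro k
    have h := F.bN4 (u k) (v k) (t/2) (t/(2*F.K))
    have he : t/2 + F.K * (t/(2*F.K)) = t := by field_simp; ring
    rwa [he] at h
  exact tendsto_of_tendsto_of_tendsto_of_le_of_le
    (hop _ _ (hu (t/2) (by linarith)) (hv (t/(2*F.K)) (by positivity)))
    tendsto_const_nhds h4 (fun k => F.N_le_one _ _)

lemma fuzzyNull_neg {u : ℕ → X} (hu : F.FuzzyNull u) : F.FuzzyNull (fun k => -(u k)) := by
  intro t ht
  simpa only [F.N_neg _ ht] using hu t ht

lemma fuzzyNull_const {w : X} (h : F.FuzzyNull (fun _ => w)) : w = 0 :=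
  (F.bN2 w).1 fun t ht => tendsto_nhds_unique tendsto_const_nhds (h t ht)

lemma eq_of_fuzzyNull_sub (hop : ContAtOneOne F.op) {z : ℕ → X} {y y' : X}
    (h : F.FuzzyNull (fun k => z k - y)) (h' : F.FuzzyNull (fun k => z k - y')) : y = y' := by
  have hadd := F.fuzzyNull_add hop h (F.fuzzyNull_neg h')
  have heq : (fun k => (z k - y) + -(z k - y')) = fun _ => y' - y := by
    funext k; abel
  rw [heq] at hadd
  have := F.fuzzyNull_const hadd
  exact (sub_eq_zero.1 this).symm

lemma fuzzyNull_zero : F.FuzzyNull (fun _ => (0:X)) := by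
  intro t ht
  simpa [F.N_zero ht] using tendsto_const_nhds (α := ℕ) (f := atTop) (a := (1:ℝ))

lemma fuzzyNull_smul (v : X) {c : ℕ → ℝ} (hc : Tendsto c atTop (𝓝 0)) :
    F.FuzzyNull (fun k => c k • v) := by
  intro t ht
  refine tendsto_one_of (fun k => F.N_le_one _ _) (fun ε hε => ?_)
  obtain ⟨s₀, hs₀⟩ := Filter.eventually_atTop.1
    ((F.bN5_lim v).eventually (eventually_gt_nhds (show 1 - ε < 1 by linarith)))
  set s₁ : ℝ := max s₀ 1 with hs₁def
  have hs₁pos : 0 < s₁ := lt_of_lt_of_le one_pos (le_max_right _ _)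
  obtain ⟨δ, hδpos, hδ⟩ := Metric.tendsto_nhdsWithin_nhds.1 F.phi_lim_zero (t/s₁) (by positivity)
  filter_upwards [NormedAddCommGroup.tendsto_nhds_zero.1 hc δ hδpos] with k hk
  by_cases h0 : c k = 0
  · rw [h0, zero_smul, F.N_zero ht]; linarith
  · have habs : 0 < |c k| := abs_pos.2 h0
    have hφpos : 0 < F.phi (c k) := by rw [F.phi_abs]; exact F.phi_pos habs
    have hφlt : F.phi (c k) < t / s₁ := by
      have hd : dist |c k| 0 < δ := by
        rw [Real.dist_eq, sub_zero, abs_abs]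
        simpa [Real.norm_eq_abs] using hk
      have := hδ (Set.mem_Ioi.2 habs) hd
      rw [Real.dist_eq, sub_zero] at this
      have habs2 : F.phi (|c k|) ≤ |F.phi (|c k|)| := le_abs_self _
      rw [F.phi_abs (c k)]
      exact lt_of_le_of_lt habs2 this
    have hs₁le : s₁ ≤ t / F.phi (c k) := by
      have h' := (lt_div_iff₀ hs₁pos).1 hφlt
      rw [le_div_iff₀ hφpos]
      nlinarith
    calc 1 - ε < F.N v s₁ := hs₀ s₁ (le_max_left _ _)
      _ ≤ F.N v (t / F.phi (c k)) := F.bN5_mono v hs₁le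
      _ = F.N (c k • v) t := (F.bN3 (c k) v t ht (ne_of_gt hφpos)).symm

lemma fuzzyNull_sum (hop : ContAtOneOne F.op) {ι : Type*} (s : Finset ι) (u : ι → ℕ → X)
    (h : ∀ i ∈ s, F.FuzzyNull (u i)) : F.FuzzyNull (fun k => ∑ i ∈ s, u i k) := by
  classical
  induction s using Finset.induction_on with
  | empty => simpa using F.fuzzyNull_zero
  | insert _ _ hni ih =>
    rename_i a s'
    simp only [Finset.sum_insert hni]
    exact F.fuzzyNull_add hop (h a (Finset.mem_insert_self _ _))
      (ih fun i hi => h i (Finset.mem_insert_of_mem hi))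

/-- If a sequence is fuzzy null then its coordinates tend to zero. -/
lemma coords_tendsto (hop : ContAtOneOne F.op) {n : ℕ} (b : Module.Basis (Fin n) ℝ X) {z : ℕ → X}
    (hz : F.FuzzyNull z) :
    Tendsto (fun k => (b.equivFun (z k) : Fin n → ℝ)) atTop (𝓝 0) := by
  by_contra hcon
  have hfr : ∃ ε > 0, ∃ᶠ k in atTop, ε ≤ ‖(b.equivFun (z k) : Fin n → ℝ)‖ := by
    rw [Metric.tendsto_atTop] at hcon
    push_neg at hcon
    obtain ⟨ε, hε, hcon⟩ := hcon
    refine ⟨ε, hε, frequently_atTop.2 fun N => ?_⟩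
    obtain ⟨k, hk1, hk2⟩ := hcon N
    exact ⟨k, hk1, by simpa [dist_zero_right] using hk2⟩
  obtain ⟨ε, hε, hfreq⟩ := hfr
  obtain ⟨ψ, hψ, hψP⟩ := Filter.extraction_of_frequently_atTop hfreq
  set c : ℕ → Fin n → ℝ := fun k => b.equivFun (z (ψ k)) with hc
  set M : ℕ → ℝ := fun k => ‖c k‖ with hM
  have hMε : ∀ k, ε ≤ M k := fun k => hψP k
  have hMpos : ∀ k, 0 < M k := fun k => lt_of_lt_of_le hε (hMε k)
  set d : ℕ → Fin n → ℝ := fun k => (M k)⁻¹ • c k with hd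
  have hd1 : ∀ k, ‖d k‖ = 1 := by
    intro k
    rw [hd, norm_smul, norm_inv, Real.norm_eq_abs, abs_of_pos (hMpos k)]
    exact inv_mul_cancel₀ (hMpos k).ne'
  have hdmem : ∀ k, d k ∈ Metric.closedBall (0 : Fin n → ℝ) 1 := by
    intro k; rw [Metric.mem_closedBall, dist_zero_right, hd1]
  obtain ⟨a, -, ψ₂, hψ₂, hda⟩ :=
    tendsto_subseq_of_bounded (Metric.isBounded_closedBall (x := (0 : Fin n → ℝ)) (r := 1)) hdmem
  have ha1 : ‖a‖ = 1 := by
    have h1 : Tendsto (fun k => ‖d (ψ₂ k)‖) atTop (𝓝 ‖a‖) :=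
      ((continuous_norm.tendsto a).comp hda)
    have h2 : Tendsto (fun k => ‖d (ψ₂ k)‖) atTop (𝓝 1) := by
      have he : (fun k => ‖d (ψ₂ k)‖) = fun _ => (1:ℝ) := funext fun k => hd1 _
      rw [he]; exact tendsto_const_nhds
    exact tendsto_nhds_unique h1 h2
  set v : X := b.equivFun.symm a with hv
  have hv0 : v ≠ 0 := by
    intro h
    have ha0 : a = 0 := b.equivFun.symm.injective (h.trans (map_zero _).symm)
    rw [ha0, norm_zero] at ha1
    norm_num at ha1
  set w : ℕ → X := fun k => (M (ψ₂ k))⁻¹ • z (ψ (ψ₂ k)) with hw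
  have hwrepr : ∀ k, (b.equivFun (w k) : Fin n → ℝ) = d (ψ₂ k) := by
    intro k
    simp only [hw, hd, hc, map_smul]
  -- (1) w - v is fuzzy null
  have h1 : F.FuzzyNull (fun k => w k - v) := by
    have heq : (fun k => w k - v) =
        fun k => ∑ i, ((d (ψ₂ k) i - a i)) • b i := by
      funext k
      have hwk : w k = b.equivFun.symm (d (ψ₂ k)) := by
        rw [← hwrepr k]; exact (b.equivFun.symm_apply_apply _).symm
      rw [hwk, hv, ← map_sub, Module.Basis.equivFun_symm_apply]
      simp [Pi.sub_apply]
    rw [heq]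
    refine F.fuzzyNull_sum hop _ _ fun i _ => F.fuzzyNull_smul _ ?_
    have hco : Tendsto (fun k => d (ψ₂ k) i) atTop (𝓝 (a i)) :=
      ((continuous_apply i).tendsto a).comp hda
    simpa using hco.sub (tendsto_const_nhds : Tendsto (fun _ : ℕ => a i) atTop (𝓝 (a i)))
  -- (2) w is fuzzy null
  have h2 : F.FuzzyNull w := by
    intro t ht
    refine tendsto_one_of (fun k => F.N_le_one _ _) (fun ε' hε' => ?_)
    have hφε : 0 < F.phi ε⁻¹ := F.phi_pos (inv_pos.2 hε)
    have hz' := hz (t / F.phi ε⁻¹) (by positivity)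
    have hmono : Tendsto (fun k => ψ (ψ₂ k)) atTop atTop :=
      (hψ.comp hψ₂).tendsto_atTop
    filter_upwards [(hz'.comp hmono).eventually
      (eventually_gt_nhds (show 1 - ε' < 1 by linarith))] with k hk
    have hMinv : 0 < (M (ψ₂ k))⁻¹ := inv_pos.2 (hMpos _)
    have hφM : 0 < F.phi ((M (ψ₂ k))⁻¹) := F.phi_pos hMinv
    have hφle : F.phi ((M (ψ₂ k))⁻¹) ≤ F.phi ε⁻¹ :=
      F.phi_strictMono.monotoneOn (Set.mem_Ioi.2 hMinv) (Set.mem_Ioi.2 (inv_pos.2 hε))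
        (inv_anti₀ hε (hMε (ψ₂ k)))
    have hdivle : t / F.phi ε⁻¹ ≤ t / F.phi ((M (ψ₂ k))⁻¹) := by
      gcongr
    calc 1 - ε' < F.N (z (ψ (ψ₂ k))) (t / F.phi ε⁻¹) := hk
      _ ≤ F.N (z (ψ (ψ₂ k))) (t / F.phi ((M (ψ₂ k))⁻¹)) := F.bN5_mono _ hdivle
      _ = F.N (w k) t := (F.bN3 _ _ t ht (ne_of_gt hφM)).symm
  -- combine
  have hv' : v = 0 := by
    have hadd := F.fuzzyNull_add hop h2 (F.fuzzyNull_neg h1)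
    have heq : (fun k => w k + -(w k - v)) = fun _ => v := by funext k; abel
    rw [heq] at hadd
    exact F.fuzzyNull_const hadd
  exact hv0 hv'

/-- Fuzzy bounded sets have bounded coordinates. -/
lemma coords_bounded (hop : ContAtOneOne F.op) {n : ℕ} (b : Module.Basis (Fin n) ℝ X) {A : Set X}
    (hb : ∀ r : ℝ, 0 < r → r < 1 → ∃ t > 0, ∀ x ∈ A, F.N x t > 1 - r) :
    ∃ C, ∀ x ∈ A, ‖(b.equivFun x : Fin n → ℝ)‖ ≤ C := by
  by_contra hcon
  push_neg at hcon
  choose x hxA hx using fun k : ℕ => hcon k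
  set M : ℕ → ℝ := fun k => ‖(b.equivFun (x (k+1)) : Fin n → ℝ)‖ with hMdef
  have hMk : ∀ k : ℕ, ((k:ℝ)+1) < M k := fun k => by
    have := hx (k+1); push_cast at this ⊢; simpa [hMdef] using this
  have hMpos : ∀ k, 0 < M k := fun k => lt_trans (by positivity) (hMk k)
  set z : ℕ → X := fun k => (M k)⁻¹ • x (k+1) with hzdef
  have hznull : F.FuzzyNull z := by
    intro t ht
    refine tendsto_one_of (fun k => F.N_le_one _ _) (fun ε hε => ?_)
    set r : ℝ := min ε 2⁻¹ with hr
    have hr0 : 0 < r := lt_min hε (by norm_num)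
    have hr1 : r < 1 := lt_of_le_of_lt (min_le_right _ _) (by norm_num)
    obtain ⟨t₀, ht₀, hN⟩ := hb r hr0 hr1
    obtain ⟨δ, hδpos, hδ⟩ := Metric.tendsto_nhdsWithin_nhds.1 F.phi_lim_zero (t/t₀) (by positivity)
    have hev : ∀ᶠ k : ℕ in atTop, δ⁻¹ < (k:ℝ)+1 := by
      have : Tendsto (fun k : ℕ => (k:ℝ)+1) atTop atTop :=
        tendsto_atTop_add_const_right _ 1 tendsto_natCast_atTop_atTop
      exact this.eventually_gt_atTop δ⁻¹
    filter_upwards [hev] with k hk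
    have hMinvpos : 0 < (M k)⁻¹ := inv_pos.2 (hMpos k)
    have hMinvlt : (M k)⁻¹ < δ := by
      have h1 : δ⁻¹ < M k := lt_trans hk (hMk k)
      have := inv_strictAnti₀ (inv_pos.2 hδpos) h1
      rwa [inv_inv] at this
    have hφpos : 0 < F.phi ((M k)⁻¹) := F.phi_pos hMinvpos
    have hφlt : F.phi ((M k)⁻¹) < t / t₀ := by
      have hd : dist ((M k)⁻¹) 0 < δ := by
        rw [Real.dist_eq, sub_zero, abs_of_pos hMinvpos]; exact hMinvlt
      have := hδ (Set.mem_Ioi.2 hMinvpos) hd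
      rw [Real.dist_eq, sub_zero] at this
      exact lt_of_le_of_lt (le_abs_self _) this
    have ht₀le : t₀ ≤ t / F.phi ((M k)⁻¹) := by
      have h' := (lt_div_iff₀ ht₀).1 hφlt
      rw [le_div_iff₀ hφpos]
      nlinarith
    have h1 : 1 - r < F.N (x (k+1)) (t / F.phi ((M k)⁻¹)) :=
      lt_of_lt_of_le (hN _ (hxA (k+1))) (F.bN5_mono _ ht₀le)
    have h2 : F.N (z k) t = F.N (x (k+1)) (t / F.phi ((M k)⁻¹)) :=
      F.bN3 _ _ t ht (ne_of_gt hφpos)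
    rw [h2]
    have : 1 - ε ≤ 1 - r := by
      have : r ≤ ε := min_le_left _ _
      linarith
    linarith
  have hcoord := F.coords_tendsto hop b hznull
  have hnorm : Tendsto (fun k => ‖(b.equivFun (z k) : Fin n → ℝ)‖) atTop (𝓝 0) := by
    simpa [Function.comp_def] using ((continuous_norm.tendsto (0 : Fin n → ℝ)).comp hcoord)
  have hone : ∀ k, ‖(b.equivFun (z k) : Fin n → ℝ)‖ = 1 := by
    intro k
    have : (b.equivFun (z k) : Fin n → ℝ) = (M k)⁻¹ • (b.equivFun (x (k+1)) : Fin n → ℝ) := by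
      simp only [hzdef, map_smul]
    rw [this, norm_smul, norm_inv, Real.norm_eq_abs, abs_of_pos (hMpos k)]
    exact inv_mul_cancel₀ (hMpos k).ne'
  rw [show (fun k => ‖(b.equivFun (z k) : Fin n → ℝ)‖) = fun _ => (1:ℝ) from funext hone] at hnorm
  exact absurd (tendsto_nhds_unique hnorm tendsto_const_nhds) zero_ne_one

end FuzzyStrongPhiBNorm

open FuzzyStrongPhiBNorm in
theorem stmt14 {X : Type*} [AddCommGroup X] [Module ℝ X] [FiniteDimensional ℝ X]
    (F : FuzzyStrongPhiBNorm X) (hop : ContAtOneOne F.op) (A : Set X) :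
    (∀ x : ℕ → X, (∀ m, x m ∈ A) →
      ∃ (y : X) (_ : y ∈ A) (φ : ℕ → ℕ), StrictMono φ ∧
        ∀ t > 0, Tendsto (fun k => F.N (x (φ k) - y) t) atTop (nhds 1)) ↔
    ((∀ (x : ℕ → X) (y : X), (∀ m, x m ∈ A) →
        (∀ t > 0, Tendsto (fun m => F.N (x m - y) t) atTop (nhds 1)) → y ∈ A) ∧
     (∀ r : ℝ, 0 < r → r < 1 → ∃ t > 0, ∀ x ∈ A, F.N x t > 1 - r)) := by
  constructor
  · intro hcomp
    constructor
    · -- closedness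
      intro x y hxA hconv
      obtain ⟨y', hy', φ, hφ, hconv'⟩ := hcomp x hxA
      have hsub : F.FuzzyNull (fun k => x (φ k) - y) := by
        intro t ht
        exact (hconv t ht).comp hφ.tendsto_atTop
      have : y = y' := F.eq_of_fuzzyNull_sub hop hsub (fun t ht => hconv' t ht)
      rwa [this]
    · -- fuzzy boundedness
      intro r hr0 hr1
      by_contra hcon
      push_neg at hcon
      have hpick : ∀ k : ℕ, ∃ x ∈ A, F.N x ((k:ℝ)+1) ≤ 1 - r := by
        intro k
        obtain ⟨x, hx1, hx2⟩ := hcon ((k:ℝ)+1) (by positivity)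
        exact ⟨x, hx1, hx2⟩
      choose x hxA hxN using hpick
      obtain ⟨y, hy, φ, hφ, hconv⟩ := hcomp x hxA
      set a : ℕ → ℝ := fun k => F.N y ((k:ℝ) - F.K) with ha
      have haten : Tendsto a atTop (𝓝 1) := by
        have h1 : Tendsto (fun k : ℕ => (k:ℝ) - F.K) atTop atTop :=
          tendsto_atTop_add_const_right _ (-F.K) tendsto_natCast_atTop_atTop
        exact (F.bN5_lim y).comp h1
      set bb : ℕ → ℝ := fun k => F.N (x (φ k) - y) 1 with hbb
      have hbten : Tendsto bb atTop (𝓝 1) := hconv 1 one_pos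
      have hle : ∀ k, F.op (a k) (bb k) ≤ 1 - r := by
        intro k
        have h4 := F.bN4 y (x (φ k) - y) ((k:ℝ) - F.K) 1
        rw [add_sub_cancel] at h4
        have he : (k:ℝ) - F.K + F.K * 1 = (k:ℝ) := by ring
        rw [he] at h4
        have hk1 : (k:ℝ) ≤ (φ k : ℝ) + 1 := by
          have := hφ.le_apply (x := k)
          push_cast
          exact_mod_cast le_trans (Nat.cast_le.2 this) (by linarith)
        calc F.op (a k) (bb k) ≤ F.N (x (φ k)) (k:ℝ) := h4
          _ ≤ F.N (x (φ k)) ((φ k : ℝ) + 1) := F.bN5_mono _ hk1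
          _ ≤ 1 - r := hxN (φ k)
      have h1le : (1:ℝ) ≤ 1 - r :=
        le_of_tendsto (hop a bb haten hbten) (Filter.Eventually.of_forall hle)
      linarith
  · rintro ⟨hclosed, hbdd⟩ x hxA
    set n := Module.finrank ℝ X with hn
    set b : Module.Basis (Fin n) ℝ X := Module.finBasis ℝ X with hb
    obtain ⟨C, hC⟩ := F.coords_bounded hop b hbdd
    have hmem : ∀ m, (b.equivFun (x m) : Fin n → ℝ) ∈ Metric.closedBall (0 : Fin n → ℝ) C := by
      intro m
      rw [Metric.mem_closedBall, dist_zero_right]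
      exact hC _ (hxA m)
    obtain ⟨a, -, ψ, hψ, hconv⟩ :=
      tendsto_subseq_of_bounded (Metric.isBounded_closedBall (x := (0 : Fin n → ℝ)) (r := C)) hmem
    set y : X := b.equivFun.symm a with hy
    have hnull : F.FuzzyNull (fun k => x (ψ k) - y) := by
      have heq : (fun k => x (ψ k) - y) =
          fun k => ∑ i, ((b.equivFun (x (ψ k)) i - a i)) • b i := by
        funext k
        have hxk : x (ψ k) - y = b.equivFun.symm (b.equivFun (x (ψ k)) - a) := by
          rw [map_sub, b.equivFun.symm_apply_apply, hy]
        rw [hxk, Module.Basis.equivFun_symm_apply]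
        simp [Pi.sub_apply]
      rw [heq]
      refine F.fuzzyNull_sum hop _ _ fun i _ => F.fuzzyNull_smul _ ?_
      have hco : Tendsto (fun k => (b.equivFun (x (ψ k)) : Fin n → ℝ) i) atTop (𝓝 (a i)) :=
        ((continuous_apply i).tendsto a).comp hconv
      simpa using hco.sub (tendsto_const_nhds : Tendsto (fun _ : ℕ => a i) atTop (𝓝 (a i)))
    refine ⟨y, hclosed (fun k => x (ψ k)) y (fun k => hxA _) (fun t ht => hnull t ht),
      ψ, hψ, fun t ht => hnull t ht⟩
end
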